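/- Let d be a positive integer and let ℓ₁,…,ℓ_d be a sequence of even positive integers with product V = ℓ₁⋯ℓ_d. Then the radius of the flip graph G(ℓ₁,…,ℓ_d) is at least (1/4 − (1/2^(d+1))·C(d−1, ⌊(d−1)/2⌋))·V, where C(·,·) denotes the binomial coefficient; that is, for every self-complementary ideal C of [ℓ₁]×⋯×[ℓ_d] there exists a self-complementary ideal I with 2^(d+1)·dist(C, I) ≥ (2^(d−1) − C(d−1, ⌊(d−1)/2⌋))·V. -/

import Mathlib

open Finset

/-- An ideal (downward-closed subset, possibly empty) of a finite poset. -/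
def IsIdeal {P : Type*} [PartialOrder P] (I : Finset P) : Prop :=
  ∀ a ∈ I, ∀ b, b ≤ a → b ∈ I

/-- A self-complementary ideal with respect to an involution `φ`. -/
def IsSCIdeal {P : Type*} [PartialOrder P] (φ : P → P) (I : Finset P) : Prop :=
  IsIdeal I ∧ ∀ a, a ∈ I ↔ φ a ∉ I

/-- The flip graph on self-complementary ideals: two ideals are adjacent when they
differ in exactly one element each way. -/
def FlipGraph {P : Type*} [PartialOrder P] [DecidableEq P] (φ : P → P) :
    SimpleGraph {I : Finset P // IsSCIdeal φ I} where
  Adj I J := I ≠ J ∧ (I.1 \ J.1).card = 1 ∧ (J.1 \ I.1).card = 1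
  symm := ⟨fun _ _ h => ⟨h.1.symm, h.2.2, h.2.1⟩⟩
  loopless := ⟨fun _ h => h.1 rfl⟩

/-- Eccentricity of a vertex: its maximum distance to any vertex. -/
noncomputable def eccentricity {V : Type*} (G : SimpleGraph V) (v : V) : ℕ :=
  ⨆ u, G.dist v u

/-- Diameter of a graph: the maximum eccentricity. -/
noncomputable def graphDiam {V : Type*} (G : SimpleGraph V) : ℕ :=
  ⨆ v, eccentricity G v

/-- Radius of a graph: the minimum eccentricity. -/
noncomputable def graphRadius {V : Type*} (G : SimpleGraph V) : ℕ :=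
  ⨅ v, eccentricity G v

/-- The order-reversing involution `aᵢ ↦ ℓᵢ + 1 - aᵢ` on a product of chains
(0-indexed via `Fin.rev`). -/
def chainRev {d : ℕ} (ℓ : Fin d → ℕ) (a : ∀ i, Fin (ℓ i)) : ∀ i, Fin (ℓ i) :=
  fun i => (a i).rev

namespace FGRLB

variable {d : ℕ} {ℓ : Fin d → ℕ}

lemma chainRev_chainRev (a : ∀ i, Fin (ℓ i)) : chainRev ℓ (chainRev ℓ a) = a := by
  funext i; simp [chainRev]

lemma chainRev_antitone {a b : ∀ i, Fin (ℓ i)} (h : a ≤ b) :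
    chainRev ℓ b ≤ chainRev ℓ a := by
  intro i
  exact Fin.rev_le_rev.mpr (h i)

lemma chainRev_inj {a b : ∀ i, Fin (ℓ i)} (h : chainRev ℓ a = chainRev ℓ b) : a = b := by
  have := congrArg (chainRev ℓ) h
  rwa [chainRev_chainRev, chainRev_chainRev] at this

/-- The flip step: replace a maximal element `a` of `C` by `φ a`. -/
lemma flip_step {C : Finset (∀ i, Fin (ℓ i))} (hC : IsSCIdeal (chainRev ℓ) C)
    {a : ∀ i, Fin (ℓ i)} (ha : a ∈ C)
    (hmax : ∀ c ∈ C, a ≤ c → c = a)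
    (hnle : ¬ a ≤ chainRev ℓ a) :
    IsSCIdeal (chainRev ℓ) (insert (chainRev ℓ a) (C.erase a)) ∧
      (C \ insert (chainRev ℓ a) (C.erase a)) = {a} ∧
      (insert (chainRev ℓ a) (C.erase a) \ C) = {chainRev ℓ a} := by
  classical
  have hane : a ≠ chainRev ℓ a := fun h => hnle (le_of_eq h)
  have hbnotin : chainRev ℓ a ∉ C := (hC.2 a).mp ha
  have hout : ∀ y, y ∉ C → chainRev ℓ y ∈ C := by
    intro y hy
    by_contra h2
    exact hy ((hC.2 y).mpr h2)
  have hmemC' : ∀ x, x ∈ insert (chainRev ℓ a) (C.erase a) ↔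
      x = chainRev ℓ a ∨ (x ≠ a ∧ x ∈ C) := by
    intro x; simp [Finset.mem_insert, Finset.mem_erase]
  have hanotin : a ∉ insert (chainRev ℓ a) (C.erase a) := by
    rw [hmemC']
    rintro (h | ⟨h, -⟩)
    · exact hane h
    · exact h rfl
  have hbin : chainRev ℓ a ∈ insert (chainRev ℓ a) (C.erase a) := by
    rw [hmemC']; exact Or.inl rfl
  have hidl : IsIdeal (insert (chainRev ℓ a) (C.erase a)) := by
    intro x hx y hyx
    rw [hmemC'] at hx ⊢
    rcases hx with rfl | ⟨hxa, hxC⟩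
    · by_cases hyb : y = chainRev ℓ a
      · exact Or.inl hyb
      · right
        have hyC : y ∈ C := by
          by_contra hyC
          have hφy : chainRev ℓ y ∈ C := hout y hyC
          have h1 : a ≤ chainRev ℓ y := by
            have h2 := chainRev_antitone (ℓ := ℓ) hyx
            rwa [chainRev_chainRev] at h2
          have h3 := hmax _ hφy h1
          apply hyb
          rw [← chainRev_chainRev (ℓ := ℓ) y, h3]
        refine ⟨fun hya => ?_, hyC⟩
        exact hnle (hya ▸ hyx)
    · have hyC : y ∈ C := hC.1 x hxC y hyx
      right
      refine ⟨fun hya => hxa (hmax x hxC (hya ▸ hyx)), hyC⟩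
  refine ⟨⟨hidl, ?_⟩, ?_, ?_⟩
  · intro x
    by_cases hxa : x = a
    · subst hxa
      constructor
      · intro h; exact absurd h hanotin
      · intro h; exact absurd hbin h
    · by_cases hxb : x = chainRev ℓ a
      · subst hxb
        constructor
        · intro _
          rw [chainRev_chainRev]
          exact hanotin
        · intro _; exact hbin
      · have hφxb : chainRev ℓ x ≠ chainRev ℓ a := fun h => hxa (chainRev_inj (ℓ := ℓ) h)
        have hφxa : chainRev ℓ x ≠ a := by
          intro h
          apply hxb
          rw [← chainRev_chainRev (ℓ := ℓ) x, h]
        rw [hmemC', hmemC']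
        constructor
        · rintro (h | ⟨-, hxC⟩)
          · exact absurd h hxb
          · rintro (h | ⟨-, h⟩)
            · exact hφxb h
            · exact (hC.2 x).mp hxC h
        · intro h
          right
          refine ⟨hxa, ?_⟩
          rw [hC.2 x]
          intro hφx
          exact h (Or.inr ⟨hφxa, hφx⟩)
  · ext x
    simp only [Finset.mem_sdiff, hmemC', Finset.mem_singleton]
    constructor
    · rintro ⟨hxC, hx⟩
      push_neg at hx
      by_contra hxa
      exact (hx.2 hxa) hxC
    · rintro rfl
      refine ⟨ha, ?_⟩
      rintro (h | ⟨h, -⟩)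
      · exact hane h
      · exact h rfl
  · ext x
    simp only [Finset.mem_sdiff, hmemC', Finset.mem_singleton]
    constructor
    · rintro ⟨h | ⟨-, hxC⟩, hxnC⟩
      · exact h
      · exact absurd hxC hxnC
    · rintro rfl
      exact ⟨Or.inl rfl, hbnotin⟩


/-- One step towards `D`. -/
lemma step_toward {C D : Finset (∀ i, Fin (ℓ i))} (hC : IsSCIdeal (chainRev ℓ) C)
    (hD : IsSCIdeal (chainRev ℓ) D) (hne : (C \ D).Nonempty) :
    ∃ C' : Finset (∀ i, Fin (ℓ i)), IsSCIdeal (chainRev ℓ) C' ∧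
      (C \ C').card = 1 ∧ (C' \ C).card = 1 ∧ C ≠ C' ∧
      (C' \ D).card + 1 = (C \ D).card ∧ (D \ C').card + 1 = (D \ C).card := by
  classical
  obtain ⟨a, haCD, hamax'⟩ := Finset.exists_maximal hne
  have hamax : ∀ x ∈ C \ D, ¬ a < x := fun x hx hlt => hlt.not_ge (hamax' hx hlt.le)
  rw [Finset.mem_sdiff] at haCD
  obtain ⟨haC, haD⟩ := haCD
  have hmax : ∀ c ∈ C, a ≤ c → c = a := by
    intro c hc hle
    by_contra hne'
    have hlt : a < c := lt_of_le_of_ne hle (fun h => hne' h.symm)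
    have hcD : c ∉ D := by
      intro hcD
      exact haD (hD.1 c hcD a hle)
    exact hamax c (Finset.mem_sdiff.mpr ⟨hc, hcD⟩) hlt
  have hφaD : chainRev ℓ a ∈ D := by
    by_contra h2
    exact haD ((hD.2 a).mpr h2)
  have hnle : ¬ a ≤ chainRev ℓ a := by
    intro hle
    exact haD (hD.1 _ hφaD a hle)
  obtain ⟨hC', hCd, hdC⟩ := flip_step hC haC hmax hnle
  have hφaC : chainRev ℓ a ∉ C := (hC.2 a).mp haC
  refine ⟨insert (chainRev ℓ a) (C.erase a), hC', by rw [hCd]; simp, by rw [hdC]; simp,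
    ?_, ?_, ?_⟩
  · intro h
    have : a ∈ insert (chainRev ℓ a) (C.erase a) := h ▸ haC
    simp only [Finset.mem_insert, Finset.mem_erase] at this
    rcases this with h' | ⟨h', -⟩
    · exact hnle (le_of_eq h')
    · exact h' rfl
  · have h1 : insert (chainRev ℓ a) (C.erase a) \ D = (C \ D).erase a := by
      ext x
      simp only [Finset.mem_sdiff, Finset.mem_insert, Finset.mem_erase]
      constructor
      · rintro ⟨h | ⟨hxa, hxC⟩, hxD⟩
        · exact absurd (h ▸ hφaD) hxD
        · exact ⟨hxa, hxC, hxD⟩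
      · rintro ⟨hxa, hxC, hxD⟩
        exact ⟨Or.inr ⟨hxa, hxC⟩, hxD⟩
    rw [h1, Finset.card_erase_add_one (Finset.mem_sdiff.mpr ⟨haC, haD⟩)]
  · have h2 : D \ insert (chainRev ℓ a) (C.erase a) = (D \ C).erase (chainRev ℓ a) := by
      ext x
      simp only [Finset.mem_sdiff, Finset.mem_insert, Finset.mem_erase]
      constructor
      · rintro ⟨hxD, hx⟩
        push_neg at hx
        refine ⟨hx.1, hxD, ?_⟩
        by_cases hxa : x = a
        · exact absurd (hxa ▸ hxD) haD
        · exact hx.2 hxa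
      · rintro ⟨hxb, hxD, hxC⟩
        refine ⟨hxD, ?_⟩
        push_neg
        exact ⟨hxb, fun _ => hxC⟩
    rw [h2, Finset.card_erase_add_one (Finset.mem_sdiff.mpr ⟨hφaD, hφaC⟩)]

lemma sc_reachable (C D : {I : Finset (∀ i, Fin (ℓ i)) // IsSCIdeal (chainRev ℓ) I}) :
    (FlipGraph (chainRev ℓ)).Reachable C D := by
  classical
  generalize hn : (C.1 \ D.1).card + (D.1 \ C.1).card = n
  induction n using Nat.strong_induction_on generalizing C D with
  | _ n ih =>
    rcases Nat.eq_zero_or_pos n with rfl | hpos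
    · have h1 : (C.1 \ D.1).card = 0 := by omega
      have h2 : (D.1 \ C.1).card = 0 := by omega
      have hCD : C.1 = D.1 := by
        apply Finset.Subset.antisymm
        · intro x hx
          by_contra hxD
          have : x ∈ C.1 \ D.1 := Finset.mem_sdiff.mpr ⟨hx, hxD⟩
          rw [Finset.card_eq_zero.mp h1] at this
          exact absurd this (Finset.notMem_empty x)
        · intro x hx
          by_contra hxC
          have : x ∈ D.1 \ C.1 := Finset.mem_sdiff.mpr ⟨hx, hxC⟩
          rw [Finset.card_eq_zero.mp h2] at this
          exact absurd this (Finset.notMem_empty x)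
      have : C = D := Subtype.ext hCD
      rw [this]
    · by_cases hCDne : (C.1 \ D.1).Nonempty
      · obtain ⟨C', hC', hc1, hc2, hneq, hm1, hm2⟩ := step_toward C.2 D.2 hCDne
        have hadj : (FlipGraph (chainRev ℓ)).Adj C ⟨C', hC'⟩ := by
          refine ⟨?_, hc1, hc2⟩
          intro h'
          exact hneq (congrArg Subtype.val h')
        have hcd : 0 < (C.1 \ D.1).card := Finset.card_pos.mpr hCDne
        have hreach := ih (n - 2) (by omega) ⟨C', hC'⟩ D (by
          show (C' \ D.1).card + (D.1 \ C').card = n - 2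
          omega)
        exact hadj.reachable.trans hreach
      · exfalso
        have h1 : (C.1 \ D.1).card = 0 := by
          rw [Finset.card_eq_zero]
          exact Finset.not_nonempty_iff_eq_empty.mp hCDne
        have hne : (D.1 \ C.1).Nonempty := by
          rw [← Finset.card_pos]; omega
        obtain ⟨a, haDC⟩ := hne
        rw [Finset.mem_sdiff] at haDC
        have hφaC : chainRev ℓ a ∈ C.1 := by
          by_contra h2
          exact haDC.2 ((C.2.2 a).mpr h2)
        have hφaD : chainRev ℓ a ∉ D.1 := (D.2.2 a).mp haDC.1
        have : chainRev ℓ a ∈ C.1 \ D.1 := Finset.mem_sdiff.mpr ⟨hφaC, hφaD⟩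
        rw [Finset.not_nonempty_iff_eq_empty.mp hCDne] at this
        exact absurd this (Finset.notMem_empty _)


lemma card_sdiff_le_walk_length {C D : {I : Finset (∀ i, Fin (ℓ i)) // IsSCIdeal (chainRev ℓ) I}}
    (w : (FlipGraph (chainRev ℓ)).Walk C D) : (C.1 \ D.1).card ≤ w.length := by
  classical
  induction w with
  | nil => simp
  | @cons u v x h p ih =>
    have hsub : u.1 \ x.1 ⊆ (v.1 \ x.1) ∪ (u.1 \ v.1) := by
      intro y hy
      rw [Finset.mem_sdiff] at hy
      by_cases hyv : y ∈ v.1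
      · exact Finset.mem_union_left _ (Finset.mem_sdiff.mpr ⟨hyv, hy.2⟩)
      · exact Finset.mem_union_right _ (Finset.mem_sdiff.mpr ⟨hy.1, hyv⟩)
    calc (u.1 \ x.1).card ≤ ((v.1 \ x.1) ∪ (u.1 \ v.1)).card := Finset.card_le_card hsub
      _ ≤ (v.1 \ x.1).card + (u.1 \ v.1).card := Finset.card_union_le _ _
      _ ≤ p.length + 1 := by
          have := h.2.1
          omega
      _ = (SimpleGraph.Walk.cons h p).length := by simp [SimpleGraph.Walk.length_cons]

lemma card_sdiff_le_dist (C D : {I : Finset (∀ i, Fin (ℓ i)) // IsSCIdeal (chainRev ℓ) I}) :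
    (C.1 \ D.1).card ≤ (FlipGraph (chainRev ℓ)).dist C D := by
  obtain ⟨w, hw⟩ := (sc_reachable C D).exists_walk_length_eq_dist
  rw [← hw]
  exact card_sdiff_le_walk_length w


/-- The coordinate half-ideal. -/
def Hhalf (ℓ : Fin d → ℕ) (j : Fin d) : Finset (∀ i, Fin (ℓ i)) :=
  univ.filter (fun a => ((a j : ℕ) < ℓ j / 2))

/-- The set of "large" coordinates of `a`. -/
def Sg (ℓ : Fin d → ℕ) (a : ∀ i, Fin (ℓ i)) : Finset (Fin d) :=
  univ.filter (fun j => ℓ j / 2 ≤ (a j : ℕ))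

lemma Hhalf_SC (heven : ∀ i, Even (ℓ i)) (j : Fin d) :
    IsSCIdeal (chainRev ℓ) (Hhalf ℓ j) := by
  constructor
  · intro a haH b hba
    simp only [Hhalf, mem_filter, mem_univ, true_and] at haH ⊢
    exact lt_of_le_of_lt (hba j) haH
  · intro a
    simp only [Hhalf, mem_filter, mem_univ, true_and, chainRev, Fin.val_rev, not_lt]
    obtain ⟨t, ht⟩ := heven j
    have h1 := (a j).isLt
    omega

lemma Sg_chainRev (heven : ∀ i, Even (ℓ i)) (a : ∀ i, Fin (ℓ i)) :
    Sg ℓ (chainRev ℓ a) = (Sg ℓ a)ᶜ := by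
  ext j
  simp only [Sg, mem_filter, mem_univ, true_and, mem_compl, not_le]
  simp only [chainRev, Fin.val_rev]
  obtain ⟨t, ht⟩ := heven j
  have h1 := (a j).isLt
  omega

lemma Sg_card_add (heven : ∀ i, Even (ℓ i)) (a : ∀ i, Fin (ℓ i)) :
    (Sg ℓ (chainRev ℓ a)).card + (Sg ℓ a).card = d := by
  rw [Sg_chainRev heven, Finset.card_compl]
  have h1 : (Sg ℓ a).card ≤ d := by
    have := Finset.card_le_univ (Sg ℓ a)
    simpa using this
  simp only [Fintype.card_fin]
  omega

lemma sum_sdiff_eq_sum_Sg (C : Finset (∀ i, Fin (ℓ i))) :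
    ∑ j : Fin d, (C \ Hhalf ℓ j).card = ∑ a ∈ C, (Sg ℓ a).card := by
  classical
  have h1 : ∀ j, C \ Hhalf ℓ j = C.filter (fun a => ℓ j / 2 ≤ (a j : ℕ)) := by
    intro j
    ext a
    simp only [Finset.mem_sdiff, Hhalf, mem_filter, mem_univ, true_and, not_lt]
  calc ∑ j : Fin d, (C \ Hhalf ℓ j).card
      = ∑ j : Fin d, ∑ a ∈ C, if ℓ j / 2 ≤ (a j : ℕ) then 1 else 0 := by
        refine Finset.sum_congr rfl fun j _ => ?_
        rw [h1 j, Finset.card_filter]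
    _ = ∑ a ∈ C, ∑ j : Fin d, if ℓ j / 2 ≤ (a j : ℕ) then 1 else 0 := Finset.sum_comm
    _ = ∑ a ∈ C, (Sg ℓ a).card := by
        refine Finset.sum_congr rfl fun a _ => ?_
        rw [Sg, Finset.card_filter]

lemma total_min_le (heven : ∀ i, Even (ℓ i)) {C : Finset (∀ i, Fin (ℓ i))}
    (hC : IsSCIdeal (chainRev ℓ) C) :
    ∑ a : ∀ i, Fin (ℓ i), min (Sg ℓ a).card (d - (Sg ℓ a).card)
      ≤ 2 * ∑ a ∈ C, (Sg ℓ a).card := by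
  classical
  set f : (∀ i, Fin (ℓ i)) → ℕ := fun a => min (Sg ℓ a).card (d - (Sg ℓ a).card) with hf
  have himg : (univ : Finset (∀ i, Fin (ℓ i))) \ C = C.image (chainRev ℓ) := by
    ext x
    simp only [Finset.mem_sdiff, Finset.mem_univ, true_and, Finset.mem_image]
    constructor
    · intro hx
      have hmem : chainRev ℓ x ∈ C := by
        by_contra h2
        exact hx ((hC.2 x).mpr h2)
      exact ⟨chainRev ℓ x, hmem, chainRev_chainRev x⟩
    · rintro ⟨y, hy, rfl⟩
      exact (hC.2 y).mp hy
  have hsplit := Finset.sum_sdiff (Finset.subset_univ C) (f := f)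
  have himgsum : ∑ a ∈ (univ : Finset (∀ i, Fin (ℓ i))) \ C, f a = ∑ a ∈ C, f a := by
    rw [himg, Finset.sum_image (fun x _ y _ h => chainRev_inj (ℓ := ℓ) h)]
    refine Finset.sum_congr rfl fun a _ => ?_
    have h2 := Sg_card_add heven a
    simp only [hf]
    omega
  have hmin_le : ∑ a ∈ C, f a ≤ ∑ a ∈ C, (Sg ℓ a).card :=
    Finset.sum_le_sum fun a _ => min_le_left _ _
  calc ∑ a : ∀ i, Fin (ℓ i), f a
      = ∑ a ∈ (univ : Finset (∀ i, Fin (ℓ i))) \ C, f a + ∑ a ∈ C, f a := hsplit.symm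
    _ = ∑ a ∈ C, f a + ∑ a ∈ C, f a := by rw [himgsum]
    _ ≤ 2 * ∑ a ∈ C, (Sg ℓ a).card := by omega

lemma card_filter_fin_lt (n c : ℕ) (hc : c ≤ n) :
    ((univ : Finset (Fin n)).filter (fun x : Fin n => (x : ℕ) < c)).card = c := by
  apply Finset.card_eq_of_bijective (fun i hi => (⟨i, lt_of_lt_of_le hi hc⟩ : Fin n))
  · intro a ha
    simp only [mem_filter, mem_univ, true_and] at ha
    exact ⟨a, ha, rfl⟩
  · intro i hi
    simp only [mem_filter, mem_univ, true_and]
    exact hi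
  · intro i j hi hj h
    exact congrArg Fin.val h

lemma card_filter_fin_le (n c : ℕ) (hc : c ≤ n) :
    ((univ : Finset (Fin n)).filter (fun x : Fin n => c ≤ (x : ℕ))).card = n - c := by
  classical
  have h := Finset.card_filter_add_card_filter_not
    (s := (univ : Finset (Fin n))) (p := fun x : Fin n => (x : ℕ) < c)
  have h2 : (univ.filter (fun x : Fin n => ¬ (x : ℕ) < c))
      = univ.filter (fun x : Fin n => c ≤ (x : ℕ)) := by
    apply Finset.filter_congr
    intro x _
    simp [not_lt]
  rw [card_filter_fin_lt n c hc, h2] at h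
  have h3 : (univ : Finset (Fin n)).card = n := by simp
  omega

lemma fiber_card (heven : ∀ i, Even (ℓ i)) (s : Finset (Fin d)) :
    ((univ : Finset (∀ i, Fin (ℓ i))).filter (fun a => Sg ℓ a = s)).card
      = ∏ i, (ℓ i / 2) := by
  classical
  have hfe : (univ : Finset (∀ i, Fin (ℓ i))).filter (fun a => Sg ℓ a = s) =
      Fintype.piFinset (fun i => univ.filter (fun x : Fin (ℓ i) => (i ∈ s ↔ ℓ i / 2 ≤ (x : ℕ)))) := by
    ext a
    simp only [mem_filter, mem_univ, true_and, Fintype.mem_piFinset]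
    rw [Finset.ext_iff]
    simp only [Sg, mem_filter, mem_univ, true_and]
    exact ⟨fun h i => (h i).symm, fun h i => (h i).symm⟩
  rw [hfe, Fintype.card_piFinset]
  refine Finset.prod_congr rfl fun i _ => ?_
  obtain ⟨t, ht⟩ := heven i
  have h2 : ℓ i / 2 ≤ ℓ i := Nat.div_le_self _ _
  by_cases hi : i ∈ s
  · have he : (univ.filter (fun x : Fin (ℓ i) => (i ∈ s ↔ ℓ i / 2 ≤ (x : ℕ))))
        = univ.filter (fun x : Fin (ℓ i) => ℓ i / 2 ≤ (x : ℕ)) := by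
      apply Finset.filter_congr
      intro x _
      simp [hi]
    rw [he, card_filter_fin_le _ _ h2]
    omega
  · have he : (univ.filter (fun x : Fin (ℓ i) => (i ∈ s ↔ ℓ i / 2 ≤ (x : ℕ))))
        = univ.filter (fun x : Fin (ℓ i) => (x : ℕ) < ℓ i / 2) := by
      apply Finset.filter_congr
      intro x _
      simp [hi, not_le]
    rw [he, card_filter_fin_lt _ _ h2]

lemma sum_subsets (f : ℕ → ℕ) :
    ∑ s : Finset (Fin d), f s.card = ∑ k ∈ range (d + 1), Nat.choose d k * f k := by
  classical
  rw [← Finset.powerset_univ, Finset.sum_powerset]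
  rw [Finset.card_univ, Fintype.card_fin]
  refine Finset.sum_congr rfl fun k hk => ?_
  have hconst : ∀ t ∈ Finset.powersetCard k (univ : Finset (Fin d)), f t.card = f k :=
    fun t ht => by rw [(Finset.mem_powersetCard.mp ht).2]
  rw [Finset.sum_congr rfl hconst, Finset.sum_const, Finset.card_powersetCard,
    Finset.card_univ, Fintype.card_fin, smul_eq_mul]

lemma total_eq (heven : ∀ i, Even (ℓ i)) :
    ∑ a : ∀ i, Fin (ℓ i), min (Sg ℓ a).card (d - (Sg ℓ a).card)
      = (∏ i, (ℓ i / 2)) * ∑ k ∈ range (d + 1), Nat.choose d k * min k (d - k) := by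
  classical
  rw [← Finset.sum_fiberwise (univ : Finset (∀ i, Fin (ℓ i))) (Sg ℓ)
    (fun a => min (Sg ℓ a).card (d - (Sg ℓ a).card))]
  have h1 : ∀ s : Finset (Fin d),
      ∑ a ∈ univ.filter (fun a : ∀ i, Fin (ℓ i) => Sg ℓ a = s),
        min (Sg ℓ a).card (d - (Sg ℓ a).card)
      = (∏ i, (ℓ i / 2)) * min s.card (d - s.card) := by
    intro s
    have hconst : ∀ a ∈ univ.filter (fun a : ∀ i, Fin (ℓ i) => Sg ℓ a = s),
        min (Sg ℓ a).card (d - (Sg ℓ a).card) = min s.card (d - s.card) := by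
      intro a ha
      rw [(mem_filter.mp ha).2]
    rw [Finset.sum_congr rfl hconst, Finset.sum_const, fiber_card heven s, smul_eq_mul]
  rw [Finset.sum_congr rfl (fun s _ => h1 s), ← Finset.mul_sum]
  congr 1
  exact sum_subsets (fun k => min k (d - k))

lemma sum_choose_mul_id (hd : 0 < d) :
    ∑ k ∈ range (d + 1), Nat.choose d k * k = d * 2 ^ (d - 1) := by
  obtain ⟨e, rfl⟩ : ∃ e, d = e + 1 := ⟨d - 1, by omega⟩
  rw [Finset.sum_range_succ']
  simp only [mul_zero, add_zero]
  have h1 : ∀ i, Nat.choose (e + 1) (i + 1) * (i + 1) = (e + 1) * Nat.choose e i :=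
    fun i => (Nat.add_one_mul_choose_eq e i).symm
  rw [Finset.sum_congr rfl (fun i _ => h1 i), ← Finset.mul_sum, Nat.sum_range_choose]
  simp

lemma sum_choose_mul_sub (hd : 0 < d) :
    ∑ k ∈ range (d + 1), Nat.choose d k * (k - (d - k))
      = d * Nat.choose (d - 1) ((d - 1) / 2) := by
  classical
  set t := d / 2 + 1 with hts
  have htle : t ≤ d + 1 := by omega
  have hsplit : ∑ k ∈ range (d + 1), Nat.choose d k * (k - (d - k))
      = ∑ k ∈ Finset.Ico t (d + 1), Nat.choose d k * (k - (d - k)) := by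
    rw [Finset.range_eq_Ico, ← Finset.sum_Ico_consecutive _ (Nat.zero_le t) htle]
    have hz : ∑ k ∈ Finset.Ico 0 t, Nat.choose d k * (k - (d - k)) = 0 := by
      apply Finset.sum_eq_zero
      intro k hk
      rw [Finset.mem_Ico] at hk
      have hk0 : k - (d - k) = 0 := by omega
      rw [hk0, mul_zero]
    rw [hz, zero_add]
  rw [hsplit]
  have key : ∀ k ∈ Finset.Ico t (d + 1),
      ((Nat.choose d k * (k - (d - k)) : ℕ) : ℤ)
        = (d : ℤ) * Nat.choose (d - 1) (k - 1) - (d : ℤ) * Nat.choose (d - 1) k := by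
    intro k hk
    rw [Finset.mem_Ico] at hk
    have hk1 : 1 ≤ k := by omega
    have hkd : k ≤ d := by omega
    have h2k : d < 2 * k := by omega
    have hA : Nat.choose d k * k = d * Nat.choose (d - 1) (k - 1) := by
      have h0 := Nat.add_one_mul_choose_eq (d - 1) (k - 1)
      have hd1 : d - 1 + 1 = d := by omega
      have hk1' : k - 1 + 1 = k := by omega
      rw [hd1, hk1'] at h0
      exact h0.symm
    have hB : Nat.choose d k * (d - k) = d * Nat.choose (d - 1) k := by
      rcases Nat.eq_or_lt_of_le hkd with rfl | hlt
      · have hz : Nat.choose (k - 1) k = 0 := Nat.choose_eq_zero_of_lt (by omega)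
        simp [hz]
      · have h3 := Nat.add_one_mul_choose_eq (d - 1) (d - k - 1)
        have hd1 : d - 1 + 1 = d := by omega
        have hdk1 : d - k - 1 + 1 = d - k := by omega
        rw [hd1, hdk1] at h3
        have h4 : Nat.choose d (d - k) = Nat.choose d k := Nat.choose_symm hkd
        have h5 : Nat.choose (d - 1) (d - k - 1) = Nat.choose (d - 1) k := by
          have h6 : d - k - 1 = (d - 1) - k := by omega
          rw [h6]
          exact Nat.choose_symm (n := d - 1) (k := k) (by omega)
        rw [h4, h5] at h3
        exact h3.symm
    have hsub1 : ((k - (d - k) : ℕ) : ℤ) = 2 * (k : ℤ) - d := by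
      have : (d : ℕ) - k ≤ k := by omega
      push_cast [Nat.cast_sub this, Nat.cast_sub hkd]
      ring
    push_cast [hsub1]
    have hA' : ((Nat.choose d k : ℤ)) * k = (d : ℤ) * Nat.choose (d - 1) (k - 1) := by
      exact_mod_cast congrArg (Nat.cast : ℕ → ℤ) hA
    have hB' : ((Nat.choose d k : ℤ)) * ((d : ℤ) - k) = (d : ℤ) * Nat.choose (d - 1) k := by
      have := congrArg (Nat.cast : ℕ → ℤ) hB
      push_cast [Nat.cast_sub hkd] at this
      linarith [this]
    linarith [hA', hB']
  have htel : ∑ k ∈ Finset.Ico t (d + 1),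
      ((d : ℤ) * Nat.choose (d - 1) (k - 1) - (d : ℤ) * Nat.choose (d - 1) k)
      = (d : ℤ) * Nat.choose (d - 1) (t - 1) - (d : ℤ) * Nat.choose (d - 1) d := by
    rw [Finset.sum_Ico_eq_sum_range]
    have hre : ∀ i ∈ range (d + 1 - t),
        ((d : ℤ) * Nat.choose (d - 1) (t + i - 1) - (d : ℤ) * Nat.choose (d - 1) (t + i))
        = (fun i => (d : ℤ) * Nat.choose (d - 1) (t - 1 + i)) i
          - (fun i => (d : ℤ) * Nat.choose (d - 1) (t - 1 + i)) (i + 1) := by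
      intro i _
      have e1 : t + i - 1 = t - 1 + i := by omega
      have e2 : t + i = t - 1 + (i + 1) := by omega
      rw [e1, e2]
    rw [Finset.sum_congr rfl hre, Finset.sum_range_sub']
    have e3 : t - 1 + 0 = t - 1 := by omega
    have e4 : t - 1 + (d + 1 - t) = d := by omega
    rw [e3, e4]
  have hzero : Nat.choose (d - 1) d = 0 := Nat.choose_eq_zero_of_lt (by omega)
  have hmid : Nat.choose (d - 1) (t - 1) = Nat.choose (d - 1) ((d - 1) / 2) := by
    have ht1 : t - 1 = d / 2 := by omega
    rw [ht1]
    rcases Nat.even_or_odd d with ⟨r, hr⟩ | ⟨r, hr⟩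
    · have h6 : d / 2 = r := by omega
      have h7 : (d - 1) / 2 = r - 1 := by omega
      have h8 : r - 1 = (d - 1) - r := by omega
      rw [h6, h7, h8]
      exact (Nat.choose_symm (n := d - 1) (k := r) (by omega)).symm
    · have h6 : d / 2 = r := by omega
      have h7 : (d - 1) / 2 = r := by omega
      rw [h6, h7]
  have hcast : ((∑ k ∈ Finset.Ico t (d + 1), Nat.choose d k * (k - (d - k)) : ℕ) : ℤ)
      = ((d * Nat.choose (d - 1) ((d - 1) / 2) : ℕ) : ℤ) := by
    rw [Nat.cast_sum, Finset.sum_congr rfl key, htel, hzero, hmid]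
    push_cast
    ring
  exact Nat.cast_inj.mp hcast

end FGRLB

/-- Radius lower bound for the flip graph on self-complementary ideals of a product of
even-length chains: for every self-complementary ideal `C` there is a self-complementary
ideal `I` with `2^(d+1) · dist(C, I) ≥ (2^(d-1) - C(d-1, ⌊(d-1)/2⌋)) · V`. -/
theorem flipGraph_radius_lower_bound (d : ℕ) (hd : 0 < d) (ℓ : Fin d → ℕ)
    (hpos : ∀ i, 0 < ℓ i) (heven : ∀ i, Even (ℓ i)) :
    ∀ C : {I : Finset (∀ i, Fin (ℓ i)) // IsSCIdeal (chainRev ℓ) I},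
      ∃ I : {I : Finset (∀ i, Fin (ℓ i)) // IsSCIdeal (chainRev ℓ) I},
        (2 ^ (d - 1) - Nat.choose (d - 1) ((d - 1) / 2)) * ∏ i, ℓ i ≤
          2 ^ (d + 1) * (FlipGraph (chainRev ℓ)).dist C I := by
  classical
  intro C
  set B := Nat.choose (d - 1) ((d - 1) / 2) with hB
  set hp := ∏ i, (ℓ i / 2) with hhp
  set X := (2 : ℕ) ^ (d - 1) with hX
  -- key combinatorial identity
  have hK : ∑ k ∈ range (d + 1), Nat.choose d k * min k (d - k) + d * B = d * X := by
    have h1 : ∀ k, Nat.choose d k * min k (d - k) + Nat.choose d k * (k - (d - k))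
        = Nat.choose d k * k := by
      intro k
      have h2 : min k (d - k) + (k - (d - k)) = k := by omega
      rw [← Nat.mul_add, h2]
    calc ∑ k ∈ range (d + 1), Nat.choose d k * min k (d - k) + d * B
        = ∑ k ∈ range (d + 1), Nat.choose d k * min k (d - k)
            + ∑ k ∈ range (d + 1), Nat.choose d k * (k - (d - k)) := by
          rw [FGRLB.sum_choose_mul_sub hd]
      _ = ∑ k ∈ range (d + 1), (Nat.choose d k * min k (d - k)
            + Nat.choose d k * (k - (d - k))) := Finset.sum_add_distrib.symm
      _ = ∑ k ∈ range (d + 1), Nat.choose d k * k :=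
          Finset.sum_congr rfl (fun k _ => h1 k)
      _ = d * X := FGRLB.sum_choose_mul_id hd
  -- sum over half ideals
  have hsum1 : hp * (∑ k ∈ range (d + 1), Nat.choose d k * min k (d - k))
      ≤ 2 * ∑ j : Fin d, (C.1 \ FGRLB.Hhalf ℓ j).card := by
    rw [FGRLB.sum_sdiff_eq_sum_Sg, ← FGRLB.total_eq heven]
    exact FGRLB.total_min_le heven C.2
  -- choose a far half ideal
  have hne : Nonempty (Fin d) := ⟨⟨0, hd⟩⟩
  have hex : ∃ j ∈ (univ : Finset (Fin d)),
      ∑ j' : Fin d, (C.1 \ FGRLB.Hhalf ℓ j').card ≤ d * (C.1 \ FGRLB.Hhalf ℓ j).card := by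
    apply Finset.exists_le_of_sum_le Finset.univ_nonempty
    have h1 : ∑ _j : Fin d, (∑ j' : Fin d, (C.1 \ FGRLB.Hhalf ℓ j').card)
        = d * ∑ j' : Fin d, (C.1 \ FGRLB.Hhalf ℓ j').card := by
      rw [Finset.sum_const, Finset.card_univ, Fintype.card_fin, smul_eq_mul]
    rw [h1, ← Finset.mul_sum]
  obtain ⟨j, -, hj⟩ := hex
  refine ⟨⟨FGRLB.Hhalf ℓ j, FGRLB.Hhalf_SC heven j⟩, ?_⟩
  set D := (FlipGraph (chainRev ℓ)).dist C ⟨FGRLB.Hhalf ℓ j, FGRLB.Hhalf_SC heven j⟩ with hD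
  have hdist : (C.1 \ FGRLB.Hhalf ℓ j).card ≤ D :=
    FGRLB.card_sdiff_le_dist C ⟨FGRLB.Hhalf ℓ j, FGRLB.Hhalf_SC heven j⟩
  set n := (C.1 \ FGRLB.Hhalf ℓ j).card with hn
  have hVp : ∏ i, ℓ i = 2 ^ d * hp := by
    have h1 : ∀ i ∈ (univ : Finset (Fin d)), ℓ i = 2 * (ℓ i / 2) := by
      intro i _
      obtain ⟨t, ht⟩ := heven i
      omega
    calc ∏ i, ℓ i = ∏ i, (2 * (ℓ i / 2)) := Finset.prod_congr rfl h1
      _ = (∏ _i : Fin d, (2 : ℕ)) * ∏ i, (ℓ i / 2) := Finset.prod_mul_distrib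
      _ = 2 ^ d * hp := by rw [Finset.prod_const, Finset.card_univ, Fintype.card_fin]
  have hmain : hp * (d * X) ≤ 2 * (d * n) + hp * (d * B) := by
    calc hp * (d * X)
        = hp * (∑ k ∈ range (d + 1), Nat.choose d k * min k (d - k)) + hp * (d * B) := by
          rw [← hK, Nat.mul_add]
      _ ≤ 2 * ∑ j' : Fin d, (C.1 \ FGRLB.Hhalf ℓ j').card + hp * (d * B) := by omega
      _ ≤ 2 * (d * n) + hp * (d * B) := by omega
  have hcore : hp * X ≤ 2 * D + hp * B := by
    have h2 : d * (hp * X) ≤ d * (2 * D + hp * B) := by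
      calc d * (hp * X) = hp * (d * X) := by ring
        _ ≤ 2 * (d * n) + hp * (d * B) := hmain
        _ = d * (2 * n) + d * (hp * B) := by ring
        _ ≤ d * (2 * D) + d * (hp * B) := by
            have h3 : 2 * n ≤ 2 * D := by omega
            exact Nat.add_le_add_right (Nat.mul_le_mul_left d h3) _
        _ = d * (2 * D + hp * B) := by ring
    exact Nat.le_of_mul_le_mul_left h2 hd
  rw [hVp]
  have e1 : (2 : ℕ) ^ d = 2 * X := by
    rw [hX, ← pow_succ']
    congr 1
    omega
  have e2 : (2 : ℕ) ^ (d + 1) = 4 * X := by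
    rw [hX, show d + 1 = 2 + (d - 1) by omega, pow_add]
    norm_num
  rw [e1, e2]
  have h3 : (X - B) * hp ≤ 2 * D := by
    rw [Nat.sub_mul]
    have c1 : X * hp = hp * X := Nat.mul_comm _ _
    have c2 : B * hp = hp * B := Nat.mul_comm _ _
    omega
  calc (X - B) * (2 * X * hp) = 2 * X * ((X - B) * hp) := by ring
    _ ≤ 2 * X * (2 * D) := Nat.mul_le_mul_left _ h3
    _ = 4 * X * D := by ring
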